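/- arXiv:1007.1158 — 2 statements merged into one kernel-verified Lean document; each statement's English description precedes it below -/
import Mathlib

section
/- For q > 1 and odd n ≥ 3 with q ≥ √2, the inequality [2n+2] > 2[n+1]/sin(π/(2n)) holds, where [r] is the quantum integer (q^r - q^{-r})/(q - q^{-1}). -/
noncomputable def qint (q : ℝ) (r : ℤ) : ℝ := (q ^ r - q ^ (-r)) / (q - q⁻¹)

lemma pow_aux (k : ℕ) (hk : 3 ≤ k) : 4 * k + 2 ≤ 2 ^ (k + 1) := by
  induction k with
  | zero => omega
  | succ m ih =>
    rcases Nat.lt_or_ge m 3 with h | h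
    · interval_cases m <;> omega
    · have := ih h
      calc 4 * (m + 1) + 2 ≤ 2 * (4 * m + 2) := by omega
        _ ≤ 2 * 2 ^ (m + 1) := by omega
        _ = 2 ^ (m + 1 + 1) := by ring

theorem qint_sin_inequality (q : ℝ) (hq : 1 < q) (hq2 : Real.sqrt 2 ≤ q)
    (n : ℕ) (hn : 3 ≤ n) (hodd : Odd n) :
    2 * qint q (n + 1) / Real.sin (Real.pi / (2 * n)) < qint q (2 * n + 2) := by
  obtain ⟨k, hk⟩ := hodd
  have hk1 : 1 ≤ k := by omega
  have hq0 : (0:ℝ) < q := lt_trans one_pos hq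
  have hqne : q ≠ 0 := ne_of_gt hq0
  have hqi : q⁻¹ < 1 := inv_lt_one_of_one_lt₀ hq
  have hden : 0 < q - q⁻¹ := by linarith
  set a : ℝ := q ^ ((n:ℤ) + 1) with ha
  set b : ℝ := q ^ (-((n:ℤ) + 1)) with hb
  have hbinv : b = a⁻¹ := by rw [ha, hb, zpow_neg]
  have hnat : a = q ^ (n + 1) := by
    rw [ha, show ((n:ℤ) + 1) = ((n+1 : ℕ) : ℤ) by push_cast; ring, zpow_natCast]
  have hapos : 0 < a := by rw [hnat]; positivity
  have hbpos : 0 < b := by rw [hbinv]; positivity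
  have ha1 : 1 < a := by rw [hnat]; exact one_lt_pow₀ hq (by omega)
  have hb1 : b < 1 := by rw [hbinv]; exact inv_lt_one_of_one_lt₀ ha1
  -- lower bound on a
  have hsqrt : (Real.sqrt 2) ^ (n + 1) ≤ q ^ (n + 1) :=
    pow_le_pow_left₀ (Real.sqrt_nonneg 2) hq2 (n + 1)
  have hs2 : (Real.sqrt 2) ^ (n + 1) = 2 ^ (k + 1) := by
    have : n + 1 = 2 * (k + 1) := by omega
    rw [this, pow_mul, Real.sq_sqrt (by norm_num : (0:ℝ) ≤ 2)]
  have halow : (2:ℝ) ^ (k + 1) ≤ a := by rw [hnat]; rw [hs2] at hsqrt; exact hsqrt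
  -- sine positivity
  have hn0 : (0:ℝ) < n := by positivity
  set s := Real.sin (Real.pi / (2 * n)) with hs
  have hx0 : 0 < Real.pi / (2 * n) := by positivity
  have hxle : Real.pi / (2 * n) ≤ Real.pi / 2 := by
    apply div_le_div_of_nonneg_left Real.pi_pos.le (by norm_num)
    have : (3:ℝ) ≤ n := by exact_mod_cast hn
    linarith
  have hspos : 0 < s := by
    apply Real.sin_pos_of_pos_of_lt_pi hx0
    calc Real.pi / (2 * n) ≤ Real.pi / 2 := hxle
      _ < Real.pi := by linarith [Real.pi_pos]
  -- positivity of qint (n+1)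
  have hA : 0 < qint q ((n:ℤ) + 1) := by
    unfold qint
    apply div_pos _ hden
    have : b < a := lt_trans hb1 ha1
    rw [← ha, ← hb]; linarith
  -- factorization
  have hfact : qint q (2 * (n:ℤ) + 2) = qint q ((n:ℤ) + 1) * (a + b) := by
    unfold qint
    have e1 : (2 * (n:ℤ) + 2) = ((n:ℤ) + 1) + ((n:ℤ) + 1) := by ring
    have e2 : (-(((n:ℤ) + 1) + ((n:ℤ) + 1))) = (-((n:ℤ)+1)) + (-((n:ℤ)+1)) := by ring
    rw [e1, e2, zpow_add₀ hqne ((n:ℤ)+1) ((n:ℤ)+1), zpow_add₀ hqne (-((n:ℤ)+1)) (-((n:ℤ)+1)), ← ha, ← hb]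
    field_simp
    ring
  -- key inequality : 2 < (a + b) * s
  have key : 2 < (a + b) * s := by
    rcases Nat.lt_or_ge k 3 with hk3 | hk3
    · interval_cases k
      · -- n = 3
        have hn3 : n = 3 := by omega
        have h6 : (2 * ((3:ℕ):ℝ)) = 6 := by norm_num
        have hs6 : s = 1 / 2 := by
          rw [hs, hn3, h6, Real.sin_pi_div_six]
        have h4 : (4:ℝ) ≤ a := by
          have h42 : ((2:ℝ)) ^ (1 + 1) = 4 := by norm_num
          linarith [halow]
        rw [hs6]; nlinarith [hbpos]
      · -- n = 5
        have hn5 : n = 5 := by omega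
        have h8 : (8:ℝ) ≤ a := by
          have h82 : ((2:ℝ)) ^ (2 + 1) = 8 := by norm_num
          linarith [halow]
        have h10 : (2 * ((5:ℕ):ℝ)) = 10 := by norm_num
        have hpi1 : (3.141592:ℝ) < Real.pi := Real.pi_gt_d6
        have hpi2 : Real.pi < 3.15 := Real.pi_lt_d2
        have hsl : (1/4 : ℝ) < s := by
          rw [hs, hn5, h10]
          have hsin03 : (0.3:ℝ) - (0.3:ℝ) ^ 3 / 4 < Real.sin 0.3 :=
            by have := Real.sin_gt_sub_cube (x := (0.3:ℝ)) (by norm_num); nlinarith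
          have hmono : Real.sin 0.3 ≤ Real.sin (Real.pi / 10) := by
            apply Real.strictMonoOn_sin.monotoneOn
            · exact Set.mem_Icc.mpr ⟨by linarith, by linarith⟩
            · exact Set.mem_Icc.mpr ⟨by linarith, by linarith⟩
            · linarith
          nlinarith [hsin03, hmono]
        calc (2:ℝ) = 8 * (1/4) := by norm_num
          _ < 8 * s := by linarith
          _ ≤ a * s := mul_le_mul_of_nonneg_right h8 hspos.le
          _ ≤ (a + b) * s := mul_le_mul_of_nonneg_right (by linarith) hspos.le
    · -- k ≥ 3 : Jordan bound s ≥ 1/n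
      have hjordan : 1 / (n:ℝ) ≤ s := by
        have hms := Real.mul_le_sin hx0.le hxle
        rw [hs]
        calc 1 / (n:ℝ) = 2 / Real.pi * (Real.pi / (2 * n)) := by
              field_simp
          _ ≤ Real.sin (Real.pi / (2 * n)) := hms
      have hpow : (4 * (k:ℝ) + 2) ≤ 2 ^ (k + 1) := by
        exact_mod_cast pow_aux k hk3
      have hcastn : (n:ℝ) = 2 * k + 1 := by exact_mod_cast hk
      have hna : 2 * (n:ℝ) ≤ a := by
        have : (2:ℝ) * n = 4 * k + 2 := by rw [hcastn]; ring
        linarith [hpow, halow]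
      calc (2:ℝ) = (2 * (n:ℝ)) * (1 / n) := by field_simp
        _ < (a + b) * (1 / n) := by
            apply mul_lt_mul_of_pos_right _ (by positivity)
            linarith
        _ ≤ (a + b) * s := mul_le_mul_of_nonneg_left hjordan (by linarith)
  -- conclude
  have key2 : 2 / s < a + b := (div_lt_iff₀ hspos).mpr key
  calc 2 * qint q ((n:ℤ) + 1) / s = qint q ((n:ℤ) + 1) * (2 / s) := by ring
    _ < qint q ((n:ℤ) + 1) * (a + b) := mul_lt_mul_of_pos_left key2 hA
    _ = qint q (2 * (n:ℤ) + 2) := hfact.symm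
end

section
/- Given the multiplication rules S² = xS + uT + cp, T² = vS + yT + cp, ST = uS + vT in a commutative algebra with identity p on span{S,T}, computing S²·T and S·(ST) and equating coefficients of T yields x·v + u·y + c = u² + v². -/
theorem associativity_constraint' {A : Type*} [CommRing A] [Algebra ℝ A]
    (S T p : A) (hpS : p * S = S) (hpT : p * T = T)
    (hli : LinearIndependent ℝ ![S, T, p])
    (x y u v c : ℝ)
    (hS2 : S ^ 2 = x • S + u • T + c • p)
    (hT2 : T ^ 2 = v • S + y • T + c • p)
    (hST : S * T = u • S + v • T) :
    x * v + u * y + c = u ^ 2 + v ^ 2 := by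
  have hT : T ≠ 0 := by
    have := hli.ne_zero 1
    simpa using this
  have key : ((x * v + u * y + c) - (u ^ 2 + v ^ 2)) • T = 0 := by
    have h0 : S ^ 2 * T - S * (S * T) = 0 := by ring
    simp only [Algebra.smul_def] at hS2 hT2 hST ⊢
    simp only [map_sub, map_add, map_mul, map_pow]
    linear_combination h0 - T * hS2 + S * hST - algebraMap ℝ A x * hST -
      algebraMap ℝ A u * hT2 - algebraMap ℝ A c * hpT +
      algebraMap ℝ A u * hS2 + algebraMap ℝ A v * hST
  rcases smul_eq_zero.mp key with h | h
  · linarith [sub_eq_zero.mp (by exact_mod_cast h)]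
  · exact absurd h hT
end
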